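/- Hierarchical Owen efficiency: for any binary hierarchical coalition structure whose root coalition is N, the sum of Owen values over all players equals ν(N) − ν(∅): Σ_{i ∈ N} Ω_i(∅, 𝒯) = ν(N) − ν(∅). -/
import Mathlib


/-- A binary hierarchical coalition structure: a binary tree whose leaves
are coalitions (finsets of players). -/
inductive BHCS (ι : Type*) where
  | leaf : Finset ι → BHCS ι
  | node : BHCS ι → BHCS ι → BHCS ι

namespace BHCS

variable {ι : Type*} [DecidableEq ι]

/-- The set of players of a (sub)hierarchy. -/
def players : BHCS ι → Finset ι
  | leaf T => T
  | node l r => players l ∪ players r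

/-- Well-formedness: leaves are nonempty and sibling subtrees are disjoint. -/
def WF : BHCS ι → Prop
  | leaf T => T.Nonempty
  | node l r => WF l ∧ WF r ∧ Disjoint (players l) (players r)

/-- The recursive Owen coalition value `Ω_i(Q, T)`. -/
noncomputable def owen (ν : Finset ι → ℝ) : Finset ι → BHCS ι → ι → ℝ
  | Q, leaf T, _ => (1 / (T.card : ℝ)) * (ν (Q ∪ T) - ν Q)
  | Q, node l r, i =>
      if i ∈ players l then
        (1 / 2) * owen ν (Q ∪ players r) l i + (1 / 2) * owen ν Q l i
      else
        (1 / 2) * owen ν (Q ∪ players l) r i + (1 / 2) * owen ν Q r i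

end BHCS

theorem BHCS.owen_sum {ι : Type*} [DecidableEq ι] (ν : Finset ι → ℝ)
    (t : BHCS ι) (hwf : BHCS.WF t) (Q : Finset ι) :
    ∑ i ∈ BHCS.players t, BHCS.owen ν Q t i = ν (Q ∪ BHCS.players t) - ν Q := by
  induction t generalizing Q with
  | leaf T =>
    simp only [BHCS.players, BHCS.owen, Finset.sum_const, nsmul_eq_mul]
    have hc : (T.card : ℝ) ≠ 0 := by
      exact_mod_cast Finset.card_ne_zero_of_mem hwf.choose_spec
    field_simp
  | node l r ihl ihr =>
    obtain ⟨hl, hr, hd⟩ := hwf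
    simp only [BHCS.players]
    rw [Finset.sum_union hd]
    have h1 : ∑ i ∈ BHCS.players l, BHCS.owen ν Q (BHCS.node l r) i =
        ∑ i ∈ BHCS.players l, ((1/2) * BHCS.owen ν (Q ∪ BHCS.players r) l i
          + (1/2) * BHCS.owen ν Q l i) := by
      refine Finset.sum_congr rfl fun i hi => ?_
      simp [BHCS.owen, hi]
    have h2 : ∑ i ∈ BHCS.players r, BHCS.owen ν Q (BHCS.node l r) i =
        ∑ i ∈ BHCS.players r, ((1/2) * BHCS.owen ν (Q ∪ BHCS.players l) r i
          + (1/2) * BHCS.owen ν Q r i) := by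
      refine Finset.sum_congr rfl fun i hi => ?_
      have : i ∉ BHCS.players l := Finset.disjoint_right.mp hd hi
      simp [BHCS.owen, this]
    rw [h1, h2, Finset.sum_add_distrib, Finset.sum_add_distrib,
      ← Finset.mul_sum, ← Finset.mul_sum, ← Finset.mul_sum, ← Finset.mul_sum,
      ihl hl, ihl hl, ihr hr, ihr hr]
    have e1 : Q ∪ BHCS.players r ∪ BHCS.players l = Q ∪ (BHCS.players l ∪ BHCS.players r) := by
      rw [Finset.union_comm (BHCS.players l)]; rw [Finset.union_assoc]
    have e2 : Q ∪ BHCS.players l ∪ BHCS.players r = Q ∪ (BHCS.players l ∪ BHCS.players r) :=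
      Finset.union_assoc _ _ _
    rw [e1, e2]; ring

theorem stmt_13 {ι : Type*} [DecidableEq ι] (N : Finset ι)
    (t : BHCS ι) (hwf : BHCS.WF t) (hroot : BHCS.players t = N)
    (ν : Finset ι → ℝ) :
    ∑ i ∈ N, BHCS.owen ν ∅ t i = ν N - ν ∅ := by
  subst hroot
  simpa using BHCS.owen_sum ν t hwf ∅
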